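/- With B₁ = AB²A⁻¹ and p_B = (0,0,1)ᵀ, the following linear relations hold in ℂ³: B·B₁·p_B = 24·p_B + 3·B₁·p_B - 2·B₁⁻¹·p_B and B·B₁⁻¹·p_B = 8·p_B + 2·B₁·p_B - B₁⁻¹·p_B. -/
import Mathlib


open Matrix Complex

noncomputable def A : Matrix (Fin 3) (Fin 3) ℂ :=
  !![1, -(Real.sqrt 2 : ℂ), (Real.sqrt 3 : ℂ) * Complex.I - 1;
     0, 1, (Real.sqrt 2 : ℂ);
     0, 0, 1]

noncomputable def B : Matrix (Fin 3) (Fin 3) ℂ :=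
  !![1, 0, 0;
     (Real.sqrt 2 : ℂ), 1, 0;
     -(Real.sqrt 3 : ℂ) * Complex.I - 1, -(Real.sqrt 2 : ℂ), 1]

noncomputable def B₁ : Matrix (Fin 3) (Fin 3) ℂ := A * B ^ 2 * A⁻¹

def pB : Fin 3 → ℂ := ![0, 0, 1]

noncomputable def herm (z w : Fin 3 → ℂ) : ℂ :=
  (starRingEnd ℂ) (z 0) * w 2 + (starRingEnd ℂ) (z 1) * w 1 + (starRingEnd ℂ) (z 2) * w 0

noncomputable def Ai : Matrix (Fin 3) (Fin 3) ℂ :=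
  !![1, (Real.sqrt 2 : ℂ), -1 - (Real.sqrt 3 : ℂ) * Complex.I;
     0, 1, -(Real.sqrt 2 : ℂ);
     0, 0, 1]

noncomputable def Bi : Matrix (Fin 3) (Fin 3) ℂ :=
  !![1, 0, 0;
     -(Real.sqrt 2 : ℂ), 1, 0;
     (Real.sqrt 3 : ℂ) * Complex.I - 1, (Real.sqrt 2 : ℂ), 1]

lemma s2sq : ((Real.sqrt 2 : ℝ) : ℂ) ^ 2 = 2 := by
  rw [sq, ← Complex.ofReal_mul, Real.mul_self_sqrt (by norm_num : (0:ℝ) ≤ 2)]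
  norm_num

lemma s3sq : ((Real.sqrt 3 : ℝ) : ℂ) ^ 2 = 3 := by
  rw [sq, ← Complex.ofReal_mul, Real.mul_self_sqrt (by norm_num : (0:ℝ) ≤ 3)]
  norm_num

lemma hAAi : A * Ai = 1 := by
  ext i j
  fin_cases i <;> fin_cases j <;>
    simp [A, Ai, Matrix.mul_apply, Fin.sum_univ_three, Matrix.one_apply,
      Matrix.vecHead, Matrix.vecTail] <;>
    (ring_nf; try simp [s2sq, s3sq, Complex.I_sq]; try ring_nf)

lemma hBBi : B * Bi = 1 := by
  ext i j
  fin_cases i <;> fin_cases j <;>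
    simp [B, Bi, Matrix.mul_apply, Fin.sum_univ_three, Matrix.one_apply,
      Matrix.vecHead, Matrix.vecTail] <;>
    (ring_nf; try simp [s2sq, s3sq, Complex.I_sq]; try ring_nf)

lemma hAinv : A⁻¹ = Ai := inv_eq_right_inv hAAi

lemma hB1inv : B₁⁻¹ = A * Bi ^ 2 * Ai := by
  apply inv_eq_right_inv
  have hAiA : Ai * A = 1 := mul_eq_one_comm.mp hAAi
  have hBiB : Bi * B = 1 := mul_eq_one_comm.mp hBBi
  calc B₁ * (A * Bi ^ 2 * Ai)
      = A * (B * ((B * (Ai * A)) * Bi) * Bi) * Ai := by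
        rw [B₁, hAinv]; simp only [pow_two, mul_assoc]
    _ = 1 := by rw [hAiA, mul_one, hBBi, mul_one, hBBi, mul_one, hAAi]

noncomputable def vv : Fin 3 → ℂ :=
  ![-16, 4 * (Real.sqrt 2 : ℂ) * (Real.sqrt 3 : ℂ) * Complex.I,
    3 + 6 * (Real.sqrt 3 : ℂ) * Complex.I]

noncomputable def ww : Fin 3 → ℂ :=
  ![-16, 8 * (Real.sqrt 2 : ℂ) + 4 * (Real.sqrt 2 : ℂ) * (Real.sqrt 3 : ℂ) * Complex.I,
    7 + 2 * (Real.sqrt 3 : ℂ) * Complex.I]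

lemma hv : B₁.mulVec pB = vv := by
  have h1 : B₁.mulVec pB = A.mulVec (B.mulVec (B.mulVec (Ai.mulVec pB))) := by
    rw [B₁, hAinv, pow_two]
    simp [Matrix.mulVec_mulVec, mul_assoc]
  have e0 : Ai.mulVec pB =
      ![-1 - (Real.sqrt 3 : ℂ) * Complex.I, -(Real.sqrt 2 : ℂ), 1] := by
    funext i; fin_cases i <;>
      simp [Ai, pB, Matrix.mulVec, dotProduct, Fin.sum_univ_three]
  have e1 : B.mulVec ![-1 - (Real.sqrt 3 : ℂ) * Complex.I, -(Real.sqrt 2 : ℂ), 1] =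
      ![-1 - (Real.sqrt 3 : ℂ) * Complex.I,
        -2 * (Real.sqrt 2 : ℂ) - (Real.sqrt 2 : ℂ) * (Real.sqrt 3 : ℂ) * Complex.I,
        1 + 2 * (Real.sqrt 3 : ℂ) * Complex.I] := by
    funext i; fin_cases i <;>
      simp [B, Matrix.mulVec, dotProduct, Fin.sum_univ_three] <;>
      (ring_nf; try simp [s2sq, s3sq, Complex.I_sq]; try ring_nf)
  have e2 : B.mulVec ![-1 - (Real.sqrt 3 : ℂ) * Complex.I,
        -2 * (Real.sqrt 2 : ℂ) - (Real.sqrt 2 : ℂ) * (Real.sqrt 3 : ℂ) * Complex.I,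
        1 + 2 * (Real.sqrt 3 : ℂ) * Complex.I] =
      ![-1 - (Real.sqrt 3 : ℂ) * Complex.I,
        -3 * (Real.sqrt 2 : ℂ) - 2 * (Real.sqrt 2 : ℂ) * (Real.sqrt 3 : ℂ) * Complex.I,
        3 + 6 * (Real.sqrt 3 : ℂ) * Complex.I] := by
    funext i; fin_cases i <;>
      simp [B, Matrix.mulVec, dotProduct, Fin.sum_univ_three] <;>
      (ring_nf; try simp [s2sq, s3sq, Complex.I_sq]; try ring_nf)
  have e3 : A.mulVec ![-1 - (Real.sqrt 3 : ℂ) * Complex.I,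
        -3 * (Real.sqrt 2 : ℂ) - 2 * (Real.sqrt 2 : ℂ) * (Real.sqrt 3 : ℂ) * Complex.I,
        3 + 6 * (Real.sqrt 3 : ℂ) * Complex.I] = vv := by
    funext i; fin_cases i <;>
      simp [A, vv, Matrix.mulVec, dotProduct, Fin.sum_univ_three] <;>
      (ring_nf; try simp [s2sq, s3sq, Complex.I_sq]; try ring_nf)
  rw [h1, e0, e1, e2, e3]

lemma hw : B₁⁻¹.mulVec pB = ww := by
  have h1 : B₁⁻¹.mulVec pB = A.mulVec (Bi.mulVec (Bi.mulVec (Ai.mulVec pB))) := by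
    rw [hB1inv, pow_two]
    simp [Matrix.mulVec_mulVec, mul_assoc]
  have e0 : Ai.mulVec pB =
      ![-1 - (Real.sqrt 3 : ℂ) * Complex.I, -(Real.sqrt 2 : ℂ), 1] := by
    funext i; fin_cases i <;>
      simp [Ai, pB, Matrix.mulVec, dotProduct, Fin.sum_univ_three]
  have e1 : Bi.mulVec ![-1 - (Real.sqrt 3 : ℂ) * Complex.I, -(Real.sqrt 2 : ℂ), 1] =
      ![-1 - (Real.sqrt 3 : ℂ) * Complex.I,
        (Real.sqrt 2 : ℂ) * (Real.sqrt 3 : ℂ) * Complex.I, 3] := by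
    funext i; fin_cases i <;>
      simp [Bi, Matrix.mulVec, dotProduct, Fin.sum_univ_three] <;>
      (ring_nf; try simp [s2sq, s3sq, Complex.I_sq]; try ring_nf)
  have e2 : Bi.mulVec ![-1 - (Real.sqrt 3 : ℂ) * Complex.I,
        (Real.sqrt 2 : ℂ) * (Real.sqrt 3 : ℂ) * Complex.I, 3] =
      ![-1 - (Real.sqrt 3 : ℂ) * Complex.I,
        (Real.sqrt 2 : ℂ) + 2 * (Real.sqrt 2 : ℂ) * (Real.sqrt 3 : ℂ) * Complex.I,
        7 + 2 * (Real.sqrt 3 : ℂ) * Complex.I] := by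
    funext i; fin_cases i <;>
      simp [Bi, Matrix.mulVec, dotProduct, Fin.sum_univ_three] <;>
      (ring_nf; try simp [s2sq, s3sq, Complex.I_sq]; try ring_nf)
  have e3 : A.mulVec ![-1 - (Real.sqrt 3 : ℂ) * Complex.I,
        (Real.sqrt 2 : ℂ) + 2 * (Real.sqrt 2 : ℂ) * (Real.sqrt 3 : ℂ) * Complex.I,
        7 + 2 * (Real.sqrt 3 : ℂ) * Complex.I] = ww := by
    funext i; fin_cases i <;>
      simp [A, ww, Matrix.mulVec, dotProduct, Fin.sum_univ_three] <;>
      (ring_nf; try simp [s2sq, s3sq, Complex.I_sq]; try ring_nf)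
  rw [h1, e0, e1, e2, e3]

theorem stmt_13 :
    B.mulVec (B₁.mulVec pB) =
      (24 : ℂ) • pB + (3 : ℂ) • B₁.mulVec pB - (2 : ℂ) • B₁⁻¹.mulVec pB ∧
    B.mulVec (B₁⁻¹.mulVec pB) =
      (8 : ℂ) • pB + (2 : ℂ) • B₁.mulVec pB - B₁⁻¹.mulVec pB := by
  rw [hv, hw]
  constructor <;> funext i <;> fin_cases i <;>
    simp [B, vv, ww, pB, Matrix.mulVec, dotProduct, Fin.sum_univ_three] <;>
    (ring_nf; try simp [s2sq, s3sq, Complex.I_sq]; try ring_nf)
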